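/- Let S be a finite binary string (a list of elements of {0,1}). If S has a contiguous substring of length i containing exactly j₁ ones and a contiguous substring of length i containing exactly j₂ ones, with j₁ ≤ j₂, then for every j with j₁ ≤ j ≤ j₂, S has a contiguous substring of length i containing exactly j ones. -/

import Mathlib

/-- Discrete intermediate value: if `f` increases by at most 1 at each step,
any value between `f a` and `f (a+n)` is attained at some `c ≤ a + n`. -/
private lemma ivt_aux (f : ℕ → ℕ) (hf : ∀ k, f (k + 1) ≤ f k + 1) (j : ℕ) :
    ∀ n a, f a ≤ j → j ≤ f (a + n) → ∃ c, c ≤ a + n ∧ f c = j := by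
  intro n
  induction n with
  | zero =>
    intro a h1 h2
    exact ⟨a, le_refl _, le_antisymm h1 (by simpa using h2)⟩
  | succ n ih =>
    intro a h1 h2
    by_cases h : j ≤ f (a + n)
    · obtain ⟨c, hc, hfc⟩ := ih a h1 h
      exact ⟨c, by omega, hfc⟩
    · push_neg at h
      have hstep := hf (a + n)
      rw [show a + (n + 1) = a + n + 1 from by omega] at h2
      exact ⟨a + n + 1, by omega, by omega⟩

private lemma count_take_succ_le (S : List Bool) (k : ℕ) :
    (S.take (k + 1)).count true ≤ (S.take k).count true + 1 := by
  have h : S.take (k + 1) = S.take k ++ (S.drop k).take 1 := List.take_add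
  have h2 : ((S.drop k).take 1).count true ≤ 1 := by
    calc ((S.drop k).take 1).count true ≤ ((S.drop k).take 1).length :=
          List.count_le_length
      _ ≤ 1 := by simp
  rw [h, List.count_append]
  omega

private lemma count_take_mono (S : List Bool) {a b : ℕ} (h : a ≤ b) :
    (S.take a).count true ≤ (S.take b).count true :=
  ((S.take_sublist_take_left (h := h)).count_le _)

theorem string_jumbled_interval_property (S : List Bool) (i j₁ j₂ : ℕ)
    (h₁ : ∃ t : List Bool, t <:+: S ∧ t.length = i ∧ t.count true = j₁)
    (h₂ : ∃ t : List Bool, t <:+: S ∧ t.length = i ∧ t.count true = j₂)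
    (hle : j₁ ≤ j₂) :
    ∀ j : ℕ, j₁ ≤ j → j ≤ j₂ →
      ∃ t : List Bool, t <:+: S ∧ t.length = i ∧ t.count true = j := by
  intro j hj1 hj2
  -- prefix count function
  set c : ℕ → ℕ := fun k => (S.take k).count true with hc
  set f : ℕ → ℕ := fun k => c (k + i) - c k with hfdef
  -- window extraction
  have window : ∀ k, (S.drop k).take i <:+: S ∧
      ((S.drop k).take i).count true = f k := by
    intro k
    constructor
    · exact ((S.drop k).take_prefix i).isInfix.trans (S.drop_suffix k).isInfix
    · have h : S.take (k + i) = S.take k ++ (S.drop k).take i := List.take_add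
      have := congrArg (List.count true) h
      rw [List.count_append] at this
      simp only [hfdef, hc]
      omega
  -- from an infix of length i with count j', get k with k + i ≤ S.length, f k = j'
  have extract : ∀ (t : List Bool) (j' : ℕ), t <:+: S → t.length = i → t.count true = j' →
      ∃ k, k + i ≤ S.length ∧ f k = j' := by
    rintro t j' ⟨s, u, rfl⟩ hlen hcnt
    refine ⟨s.length, ?_, ?_⟩
    · simp only [List.length_append, hlen]; omega
    · have hw : ((s ++ t ++ u).drop s.length).take i = t := by
        rw [List.append_assoc, List.drop_left, ← hlen, List.take_left]
      have := (window s.length).2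
      rw [hw, hcnt] at this
      exact this.symm
  obtain ⟨t₁, ht₁, hl₁, hc₁⟩ := h₁
  obtain ⟨t₂, ht₂, hl₂, hc₂⟩ := h₂
  obtain ⟨k₁, hk₁, hf₁⟩ := extract t₁ j₁ ht₁ hl₁ hc₁
  obtain ⟨k₂, hk₂, hf₂⟩ := extract t₂ j₂ ht₂ hl₂ hc₂
  -- slide bounds
  have mono : ∀ k, c k ≤ c (k + i) := fun k => count_take_mono S (by omega)
  have stepc : ∀ k, c (k + 1) ≤ c k + 1 := fun k => count_take_succ_le S k
  have monoc : ∀ a b, a ≤ b → c a ≤ c b := fun a b h => count_take_mono S h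
  have slide_up : ∀ k, f (k + 1) ≤ f k + 1 := by
    intro k
    have h1 := stepc (k + i)
    have h2 := monoc k (k + 1) (by omega)
    have h3 := mono k
    have h4 := mono (k + 1)
    simp only [hfdef]
    have : k + 1 + i = k + i + 1 := by omega
    rw [this]
    omega
  have slide_down : ∀ k, f k ≤ f (k + 1) + 1 := by
    intro k
    have h1 := stepc k
    have h2 := monoc (k + i) (k + 1 + i) (by omega)
    have h3 := mono k
    have h4 := mono (k + 1)
    simp only [hfdef]
    omega
  -- apply discrete IVT, splitting on order of k₁, k₂
  rcases le_or_gt k₁ k₂ with hord | hord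
  · obtain ⟨cc, hcc, hfcc⟩ := ivt_aux f slide_up j (k₂ - k₁) k₁
      (by omega) (by rw [show k₁ + (k₂ - k₁) = k₂ from by omega]; omega)
    have hcle : cc + i ≤ S.length := by omega
    refine ⟨(S.drop cc).take i, (window cc).1, ?_, by rw [(window cc).2]; exact hfcc⟩
    simp [List.length_take, List.length_drop]
    omega
  · -- reversed: use g k = f (k₁ - k)
    set g : ℕ → ℕ := fun k => f (k₁ - k) with hg
    have hgstep : ∀ k, g (k + 1) ≤ g k + 1 := by
      intro k
      simp only [hg]
      rcases le_or_gt k₁ k with h | h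
      · rw [show k₁ - (k + 1) = 0 from by omega, show k₁ - k = 0 from by omega]; omega
      · have := slide_down (k₁ - (k + 1))
        rw [show k₁ - (k + 1) + 1 = k₁ - k from by omega] at this
        omega
    obtain ⟨cc, hcc, hfcc⟩ := ivt_aux g hgstep j (k₁ - k₂) 0
      (by simp [hg]; omega) (by simp [hg, show k₁ - (k₁ - k₂) = k₂ from by omega]; omega)
    set d := k₁ - cc with hd
    have hdle : d + i ≤ S.length := by omega
    have hfd : f d = j := hfcc
    refine ⟨(S.drop d).take i, (window d).1, ?_, by rw [(window d).2]; exact hfd⟩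
    simp [List.length_take, List.length_drop]
    omega
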